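/- Let $F \subseteq K$ be an extension of differential fields of characteristic zero, let $T \in GL_m(F)$, and suppose $\alpha_1, \dots, \alpha_m \in K$ are independent differential transcendentals over $F$ (the family of all their derivatives is algebraically independent over $F$). If $\beta = T\alpha + r$ for some $r \in F^m$, then $\beta_1, \dots, \beta_m$ are also independent differential transcendentals over $F$. -/

import Mathlib

open Finset MvPolynomial
section
variable {K : Type*} [Field K] [CharZero K] (d : Derivation ℚ K K)

lemma iterZero (n : ℕ) : (⇑d)^[n] (0:K) = 0 := by
  induction n with
  | zero => rfl
  | succ n ih => rw [Function.iterate_succ_apply, map_zero, ih]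

lemma iterSub (n : ℕ) (a b : K) : (⇑d)^[n] (a - b) = (⇑d)^[n] a - (⇑d)^[n] b := by
  induction n generalizing a b with
  | zero => rfl
  | succ n ih =>
    rw [Function.iterate_succ_apply, map_sub, ih, ← Function.iterate_succ_apply,
      ← Function.iterate_succ_apply]

lemma iterAdd (n : ℕ) (a b : K) : (⇑d)^[n] (a + b) = (⇑d)^[n] a + (⇑d)^[n] b := by
  induction n generalizing a b with
  | zero => rfl
  | succ n ih =>
    rw [Function.iterate_succ_apply, map_add, ih, ← Function.iterate_succ_apply,
      ← Function.iterate_succ_apply]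

lemma iterSum {ι : Type*} (n : ℕ) (s : Finset ι) (f : ι → K) :
    (⇑d)^[n] (∑ i ∈ s, f i) = ∑ i ∈ s, (⇑d)^[n] (f i) := by
  classical
  induction s using Finset.induction with
  | empty => simpa using iterZero d n
  | insert _ _ h ih => rw [Finset.sum_insert h, Finset.sum_insert h, iterAdd, ih]

lemma iterLeibniz (n : ℕ) (a b : K) :
    (⇑d)^[n] (a * b) =
      ∑ k ∈ range (n+1), n.choose k • ((⇑d)^[n-k] a * (⇑d)^[k] b) := by
  induction n with
  | zero => simp
  | succ n IH =>
    calc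
      (⇑d)^[n + 1] (a * b) =
          d (∑ k ∈ range (n+1), n.choose k • ((⇑d)^[n - k] a * (⇑d)^[k] b)) := by
        rw [Function.iterate_succ_apply', IH]
      _ = (∑ k ∈ range (n+1),
            n.choose k • ((⇑d)^[n - k + 1] a * (⇑d)^[k] b)) +
          ∑ k ∈ range (n+1),
            n.choose k • ((⇑d)^[n - k] a * (⇑d)^[k + 1] b) := by
        rw [map_sum]
        simp_rw [map_nsmul, Derivation.leibniz, smul_eq_mul, Function.iterate_succ_apply',
          smul_add, sum_add_distrib]
        rw [add_comm]
        congr 1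
        exact sum_congr rfl fun k _ => by rw [mul_comm]
      _ = (∑ k ∈ range (n+1),
                n.choose k.succ • ((⇑d)^[n - k] a * (⇑d)^[k + 1] b)) +
              1 • ((⇑d)^[n + 1] a * (⇑d)^[0] b) +
            ∑ k ∈ range (n+1), n.choose k • ((⇑d)^[n - k] a * (⇑d)^[k + 1] b) := ?_
      _ = ((∑ k ∈ range (n+1), n.choose k • ((⇑d)^[n - k] a * (⇑d)^[k + 1] b)) +
              ∑ k ∈ range (n+1),
                n.choose k.succ • ((⇑d)^[n - k] a * (⇑d)^[k + 1] b)) +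
            1 • ((⇑d)^[n + 1] a * (⇑d)^[0] b) := by
        rw [add_comm, add_assoc]
      _ = (∑ i ∈ range (n+1),
              (n + 1).choose (i + 1) • ((⇑d)^[n + 1 - (i + 1)] a * (⇑d)^[i + 1] b)) +
            1 • ((⇑d)^[n + 1] a * (⇑d)^[0] b) := by
        simp_rw [Nat.choose_succ_succ, Nat.succ_sub_succ, add_smul, sum_add_distrib]
      _ = ∑ k ∈ range (n+2),
            (n+1).choose k • ((⇑d)^[n+1-k] a * (⇑d)^[k] b) := by
        rw [sum_range_succ' _ (n+1), Nat.choose_zero_right, tsub_zero]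
    congr
    refine (sum_range_succ' _ _).trans (congr_arg₂ (· + ·) ?_ ?_)
    · rw [sum_range_succ, Nat.choose_succ_self, zero_smul, add_zero]
      refine sum_congr rfl fun k hk => ?_
      rw [mem_range] at hk
      congr
      omega
    · rw [Nat.choose_zero_right, tsub_zero]
end

theorem stmt14 {K : Type*} [Field K] [CharZero K] (d : Derivation ℚ K K)
    (F : Subfield K) (hF : ∀ x ∈ F, d x ∈ F) (m : ℕ)
    (T : Matrix (Fin m) (Fin m) K) (hT : ∀ i j, T i j ∈ F) (hTu : IsUnit T)
    (α β r : Fin m → K) (hr : ∀ i, r i ∈ F)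
    (hα : AlgebraicIndependent (↥F) (fun p : Fin m × ℕ => (⇑d)^[p.2] (α p.1)))
    (hβdef : ∀ i, β i = (∑ j, T i j * α j) + r i) :
    AlgebraicIndependent (↥F) (fun p : Fin m × ℕ => (⇑d)^[p.2] (β p.1)) := by
  classical
  set γ : Fin m × ℕ → K := fun p => (⇑d)^[p.2] (α p.1) with hγ
  set δ : Fin m × ℕ → K := fun p => (⇑d)^[p.2] (β p.1) with hδ
  have hFi : ∀ (k : ℕ) (x : K), x ∈ F → (⇑d)^[k] x ∈ F := by
    intro k
    induction k with
    | zero => intro x hx; exact hx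
    | succ k ih => intro x hx; rw [Function.iterate_succ_apply]; exact ih _ (hF x hx)
  -- the matrix over F and its inverse
  set T' : Matrix (Fin m) (Fin m) ↥F := Matrix.of fun i j => (⟨T i j, hT i j⟩ : ↥F) with hT'
  have hTmap : (F.subtype).mapMatrix T' = T := by
    ext i j; rfl
  have hdet : IsUnit T'.det := by
    rw [isUnit_iff_ne_zero]
    intro h0
    have : T.det = 0 := by
      rw [← hTmap, ← RingHom.map_det, h0, map_zero]
    exact (Matrix.isUnit_iff_isUnit_det T).mp hTu |>.ne_zero (by simpa using this)
  set S' : Matrix (Fin m) (Fin m) ↥F := T'⁻¹ with hS'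
  have hTS : T' * S' = 1 := Matrix.mul_nonsing_inv T' hdet
  have hST : S' * T' = 1 := Matrix.nonsing_inv_mul T' hdet
  set S : Fin m → Fin m → K := fun j i => ↑(S' j i) with hS
  -- the affine expression of α in terms of β
  set u : Fin m → K := fun j => ∑ i, S j i * r i with hu
  have humem : ∀ j, u j ∈ F := fun j => Subfield.sum_mem _ fun i _ =>
    F.mul_mem (S' j i).2 (hr i)
  have hSTentry : ∀ j l, (∑ i, S j i * T i l) = if j = l then (1:K) else 0 := by
    intro j l
    have h1 : (S' * T') j l = ∑ i, S' j i * T' i l := Matrix.mul_apply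
    have h2 : (S' * T') j l = if j = l then 1 else 0 := by rw [hST, Matrix.one_apply]
    calc (∑ i, S j i * T i l) = ((∑ i, S' j i * T' i l : ↥F) : K) := by
          push_cast; rfl
      _ = (((if j = l then 1 else 0) : ↥F) : K) := by rw [← h1, h2]
      _ = if j = l then (1:K) else 0 := by split <;> simp
  have halg : ∀ j, α j = ∑ i, S j i * β i - u j := by
    intro j
    have : ∑ i, S j i * β i = (∑ l, (∑ i, S j i * T i l) * α l) + u j := by
      simp only [hβdef, mul_add, Finset.sum_add_distrib, Finset.mul_sum]
      rw [Finset.sum_comm]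
      congr 1
      · exact Finset.sum_congr rfl fun l _ => by
          rw [Finset.sum_mul]
          exact Finset.sum_congr rfl fun i _ => (mul_assoc _ _ _).symm
    rw [this]
    simp [hSTentry]
  have hkey : ∀ j n, (⇑d)^[n] (α j) =
      (∑ i, ∑ k ∈ range (n+1), n.choose k • ((⇑d)^[n-k] (S j i) * (⇑d)^[k] (β i)))
        - (⇑d)^[n] (u j) := by
    intro j n
    rw [halg j, iterSub, iterSum]
    congr 1
    exact Finset.sum_congr rfl fun i _ => iterLeibniz d n (S j i) (β i)
  -- coefficients in F
  set t : Fin m → Fin m → ↥F := fun i j => ⟨T i j, hT i j⟩ with ht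
  set cS : Fin m → Fin m → ℕ → ℕ → ↥F :=
    fun j i n k => ⟨(⇑d)^[n-k] (S j i), hFi _ _ (S' j i).2⟩ with hcS
  set cu : Fin m → ℕ → ↥F := fun j n => ⟨(⇑d)^[n] (u j), hFi _ _ (humem j)⟩ with hcu
  -- the inverse substitution polynomials
  set Q : Fin m × ℕ → MvPolynomial (Fin m × ℕ) ↥F := fun p =>
    (∑ i, ∑ k ∈ range (p.2+1),
      p.2.choose k • (C (cS p.1 i p.2 k) * X (i, k))) - C (cu p.1 p.2) with hQ
  have haQ : ∀ p, aeval δ (Q p) = γ p := by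
    rintro ⟨j, n⟩
    have : aeval δ (Q (j, n)) =
        (∑ i, ∑ k ∈ range (n+1),
          n.choose k • ((⇑d)^[n-k] (S j i) * (⇑d)^[k] (β i))) - (⇑d)^[n] (u j) := by
      simp only [hQ, map_sub, map_sum, map_nsmul, map_mul, aeval_C, aeval_X, hδ]
      rfl
    rw [this, hγ, ← hkey]
  have hcomp : ∀ f : MvPolynomial (Fin m × ℕ) ↥F,
      aeval (R := ↥F) δ (aeval (R := ↥F) Q f) = aeval (R := ↥F) γ f := by
    intro f
    have : (MvPolynomial.aeval δ : MvPolynomial (Fin m × ℕ) ↥F →ₐ[↥F] K).comp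
        (MvPolynomial.aeval Q : MvPolynomial (Fin m × ℕ) ↥F →ₐ[↥F] MvPolynomial (Fin m × ℕ) ↥F)
        = MvPolynomial.aeval γ := by
      apply MvPolynomial.algHom_ext
      intro p
      simp [haQ p]
    calc aeval δ (aeval Q f)
        = ((MvPolynomial.aeval δ : MvPolynomial (Fin m × ℕ) ↥F →ₐ[↥F] K).comp
            (MvPolynomial.aeval Q :
              MvPolynomial (Fin m × ℕ) ↥F →ₐ[↥F] MvPolynomial (Fin m × ℕ) ↥F)) f := rfl
      _ = aeval γ f := by rw [this]
  -- surjectivity of `aeval Q`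
  have hXmem : ∀ (n : ℕ) (i : Fin m),
      (X (i, n) : MvPolynomial (Fin m × ℕ) ↥F) ∈ (MvPolynomial.aeval (R := ↥F) Q).range := by
    intro n
    induction n using Nat.strong_induction_on with
    | _ n IH =>
      intro i
      have hTSentry : ∀ i', (∑ j, t i j * cS j i' n n) = if i = i' then (1:↥F) else 0 := by
        intro i'
        have h1 : (T' * S') i i' = ∑ j, T' i j * S' j i' := Matrix.mul_apply
        have h2 : (T' * S') i i' = if i = i' then 1 else 0 := by rw [hTS, Matrix.one_apply]
        rw [← h2, h1]
        exact Finset.sum_congr rfl fun j _ => by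
          congr 1
          apply Subtype.ext
          simp [hcS, hS]
      set L : MvPolynomial (Fin m × ℕ) ↥F :=
        ∑ j, ∑ i', ∑ k ∈ range n,
          n.choose k • (C (t i j * cS j i' n k) * X (i', k)) with hL
      set M : MvPolynomial (Fin m × ℕ) ↥F := C (∑ j, t i j * cu j n) with hM
      have heq : ∑ j, C (t i j) * Q (j, n) = L + X (i, n) - M := by
        have e1 : ∀ j, C (t i j) * Q (j, n) =
            (∑ i', ∑ k ∈ range (n+1),
              n.choose k • (C (t i j * cS j i' n k) * X (i', k)))
              - C (t i j) * C (cu j n) := by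
          intro j
          rw [hQ]
          simp only [mul_sub]
          congr 1
          rw [Finset.mul_sum]
          refine Finset.sum_congr rfl fun i' _ => ?_
          rw [Finset.mul_sum]
          refine Finset.sum_congr rfl fun k _ => ?_
          rw [mul_smul_comm, ← mul_assoc, ← C_mul]
        calc ∑ j, C (t i j) * Q (j, n)
            = (∑ j, ∑ i', ∑ k ∈ range (n+1),
                n.choose k • (C (t i j * cS j i' n k) * X (i', k)))
              - ∑ j, C (t i j) * C (cu j n) := by
              simp only [e1, Finset.sum_sub_distrib]
          _ = (L + ∑ j, ∑ i', C (t i j * cS j i' n n) * X (i', n)) - M := by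
              congr 1
              · simp only [Finset.sum_range_succ, Nat.choose_self, one_smul,
                  Finset.sum_add_distrib, hL]
              · rw [hM, map_sum]
                exact Finset.sum_congr rfl fun j _ => by rw [C_mul]
          _ = L + X (i, n) - M := by
              congr 2
              rw [Finset.sum_comm]
              have : ∀ i', ∑ j, C (t i j * cS j i' n n) * X ((i' : Fin m), n)
                  = C (if i = i' then (1:↥F) else 0) * X (i', n) := by
                intro i'
                rw [← Finset.sum_mul, ← map_sum, hTSentry i']
              simp only [this]
              simp [Finset.sum_ite_eq, apply_ite C]
      have hXeq : (X (i, n) : MvPolynomial (Fin m × ℕ) ↥F)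
          = (∑ j, C (t i j) * Q (j, n)) + M - L := by
        rw [heq]; ring
      rw [hXeq]
      have hC : ∀ a : ↥F, (C a : MvPolynomial (Fin m × ℕ) ↥F) ∈ (MvPolynomial.aeval (R := ↥F) Q).range := by
        intro a
        exact ⟨C a, by simp⟩
      have hQmem : ∀ p, Q p ∈ (MvPolynomial.aeval (R := ↥F) Q).range := fun p => ⟨X p, by simp⟩
      refine sub_mem (add_mem (Subalgebra.sum_mem _ fun j _ =>
        mul_mem (hC _) (hQmem _)) (hC _)) ?_
      refine Subalgebra.sum_mem _ fun j _ => Subalgebra.sum_mem _ fun i' _ =>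
        Subalgebra.sum_mem _ fun k hk => ?_
      exact nsmul_mem (mul_mem (hC _) (IH k (Finset.mem_range.mp hk) i')) _
  have hsurj : Function.Surjective (MvPolynomial.aeval Q :
      MvPolynomial (Fin m × ℕ) ↥F →ₐ[↥F] MvPolynomial (Fin m × ℕ) ↥F) := by
    have hrange : (MvPolynomial.aeval (R := ↥F) Q).range = ⊤ := by
      rw [eq_top_iff, ← MvPolynomial.adjoin_range_X]
      apply Algebra.adjoin_le
      rintro _ ⟨p, rfl⟩
      exact hXmem p.2 p.1
    intro f
    have : f ∈ (MvPolynomial.aeval (R := ↥F) Q).range := hrange ▸ Algebra.mem_top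
    exact this
  -- conclude
  rw [algebraicIndependent_iff_injective_aeval] at hα ⊢
  intro f g hfg
  obtain ⟨f', rfl⟩ := hsurj f
  obtain ⟨g', rfl⟩ := hsurj g
  have : aeval γ f' = aeval γ g' := by
    rw [← hcomp, ← hcomp]
    exact hfg
  rw [hα this]
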